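/- arXiv:1807.06982 — 2 statements merged into one kernel-verified Lean document; each statement's English description precedes it below -/
import Mathlib

section
/- Let $q_{2k+1}(t) := \sum_{i=0}^{k} B_i^{(2k+1)}(t)$ where $B_i^{(n)}$ are the Bernstein polynomials. Then for every $m = 1, \dots, k$, the $m$-th derivative of $q_{2k+1}$ vanishes at both endpoints: $q_{2k+1}^{(m)}(0) = q_{2k+1}^{(m)}(1) = 0$. -/
open Polynomial

/-- The partial sum of the first `k+1` Bernstein polynomials of degree `2k+1`. -/
noncomputable def qPoly (k : ℕ) : Polynomial ℝ :=
  ∑ i ∈ Finset.range (k + 1), bernsteinPolynomial ℝ (2 * k + 1) i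

theorem qPoly_deriv_vanish_at_endpoints (k m : ℕ) (hm1 : 1 ≤ m) (hmk : m ≤ k) :
    ((Polynomial.derivative)^[m] (qPoly k)).eval 0 = 0 ∧
      ((Polynomial.derivative)^[m] (qPoly k)).eval 1 = 0 := by
  constructor
  · have hq : qPoly k =
        1 - ∑ i ∈ Finset.Ico (k + 1) (2 * k + 1 + 1), bernsteinPolynomial ℝ (2 * k + 1) i := by
      rw [eq_sub_iff_add_eq, qPoly, Finset.range_eq_Ico,
        Finset.sum_Ico_consecutive _ (by omega) (by omega),
        ← Finset.range_eq_Ico, bernsteinPolynomial.sum]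
    rw [hq, Polynomial.iterate_derivative_sub, Polynomial.iterate_derivative_one hm1,
      Polynomial.iterate_derivative_sum, Polynomial.eval_sub, Polynomial.eval_zero,
      Polynomial.eval_finset_sum, Finset.sum_eq_zero, sub_zero]
    intro i hi
    exact bernsteinPolynomial.iterate_derivative_at_0_eq_zero_of_lt ℝ _
      (by simp [Finset.mem_Ico] at hi; omega)
  · rw [qPoly, Polynomial.iterate_derivative_sum, Polynomial.eval_finset_sum]
    refine Finset.sum_eq_zero fun i hi => ?_
    exact bernsteinPolynomial.iterate_derivative_at_1_eq_zero_of_lt ℝ _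
      (by simp [Finset.mem_range] at hi; omega)
end

section
/- Let $u : [-1,1] \to \mathbb{R}$ be $M$ times continuously differentiable, vanishing together with its first $M-1$ derivatives at $\pm 1$, and suppose $|u^{(M)}(x)| \le C$ for all $x$. Then for all $\ell \geq 2M$, $\left| \int_{-1}^1 u(x) P_\ell(x)\, dx \right| \leq \frac{2^M \cdot 2 C}{(2\ell - 2M + 1)^M}$; in particular this integral is $O(\ell^{-M})$ as $\ell \to \infty$. -/
open Polynomial

/-- The Legendre polynomial `P_ℓ`, via Rodrigues' formula. -/
noncomputable def legendreP (ℓ : ℕ) : Polynomial ℝ :=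
  ((2 ^ ℓ * Nat.factorial ℓ : ℝ))⁻¹ • (Polynomial.derivative)^[ℓ] ((X ^ 2 - 1) ^ ℓ)

noncomputable def qp (n : ℕ) : Polynomial ℝ := (X^2 - 1)^n

noncomputable def cst (n : ℕ) : ℝ := (2^n * n.factorial : ℝ)


lemma deriv_qp (n : ℕ) : derivative (qp (n+1)) = C (2*(n+1) : ℝ) * (X * qp n) := by
  unfold qp
  rw [derivative_pow]
  simp [derivative_X_pow]
  rw [map_ofNat C 2]
  ring

lemma pearson (m : ℕ) : (X^2-1) * derivative (qp m) = C (2*m : ℝ) * (X * qp m) := by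
  cases m with
  | zero => simp [qp]
  | succ n =>
    rw [deriv_qp]
    have : (X^2-1 : Polynomial ℝ) * (C (2*(n+1):ℝ) * (X * qp n)) = C (2*(n+1):ℝ) * (X * ((X^2-1) * qp n)) := by ring
    rw [this]
    congr 2
    · push_cast; ring_nf
    · unfold qp; ring

lemma leibniz_X (p : Polynomial ℝ) : ∀ k, derivative^[k+1] (X * p) = X * derivative^[k+1] p + C (k+1 : ℝ) * derivative^[k] p := by
  intro k
  induction k generalizing p with
  | zero => simp [derivative_mul]; ring
  | succ k ih =>
    rw [Function.iterate_succ_apply, derivative_mul, derivative_X, one_mul,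
      iterate_map_add, ih (derivative p)]
    have e1 : derivative^[k] (derivative p) = derivative^[k+1] p :=
      (Function.iterate_succ_apply derivative k p).symm
    have e2 : derivative^[k+1] (derivative p) = derivative^[k+1+1] p :=
      (Function.iterate_succ_apply derivative (k+1) p).symm
    rw [e1, e2]
    push_cast
    simp only [map_add, map_one]
    ring

lemma pearsonIter (m : ℕ) : ∀ k, (X^2-1) * derivative^[k+2] (qp m)
    = C ((2*m : ℝ) - 2*(k+1)) * (X * derivative^[k+1] (qp m))
      + C (((k+1)*(2*m-k) : ℝ)) * derivative^[k] (qp m) := by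
  intro k
  induction k with
  | zero =>
    have h := congrArg derivative (pearson m)
    simp only [derivative_mul, derivative_add, derivative_C, derivative_X, derivative_sub,
      derivative_one, derivative_X_pow] at h
    simp only [Function.iterate_succ_apply', Function.iterate_zero_apply]
    push_cast
    push_cast at h
    simp only [map_sub, map_add, map_mul, map_one, map_ofNat, map_zero, pow_one] at h ⊢
    linear_combination h
  | succ k ih =>
    have h := congrArg derivative ih
    simp only [derivative_mul, derivative_add, derivative_C, derivative_X, derivative_sub,
      derivative_one, derivative_X_pow] at h
    have e1 : derivative (derivative^[k+2] (qp m)) = derivative^[k+3] (qp m) :=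
      (Function.iterate_succ_apply' derivative (k+2) (qp m)).symm
    have e2 : derivative (derivative^[k+1] (qp m)) = derivative^[k+2] (qp m) :=
      (Function.iterate_succ_apply' derivative (k+1) (qp m)).symm
    have e3 : derivative (derivative^[k] (qp m)) = derivative^[k+1] (qp m) :=
      (Function.iterate_succ_apply' derivative k (qp m)).symm
    rw [e1, e2, e3] at h
    simp only [show k+1+2 = k+3 by omega, show k+1+1 = k+2 by omega]
    push_cast
    push_cast at h
    simp only [map_sub, map_add, map_mul, map_one, map_ofNat, map_zero, pow_one] at h ⊢
    linear_combination h

lemma leibniz_X' (p : Polynomial ℝ) (k : ℕ) :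
    derivative^[k] (X * p) = X * derivative^[k] p + C (k : ℝ) * derivative^[k-1] p := by
  cases k with
  | zero => simp
  | succ k => simpa using leibniz_X p k

lemma C1 (s : ℕ) : (X^2-1) * derivative^[s+1] (qp s) = C ((s*(s+1) : ℝ)) * derivative^[s-1] (qp s) := by
  cases s with
  | zero => simp [qp]
  | succ s =>
    have h := pearsonIter (s+1) s
    simp only [show s+1+1 = s+2 by omega, show s+1-1 = s by omega] at h ⊢
    push_cast at h ⊢
    simp only [map_sub, map_add, map_mul, map_one, map_ofNat, map_zero, pow_one] at h ⊢
    linear_combination h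

lemma iter_shift (k : ℕ) (p : Polynomial ℝ) :
    derivative^[k] (derivative p) = derivative^[k+1] p :=
  (Function.iterate_succ_apply derivative k p).symm

lemma lem_i (s : ℕ) : derivative^[s+2] (qp (s+1))
    = C (2*(s+1) : ℝ) * (X * derivative^[s+1] (qp s)) + C ((2*(s+1)*(s+1) : ℝ)) * derivative^[s] (qp s) := by
  rw [← iter_shift (s+1), deriv_qp, iterate_derivative_C_mul, leibniz_X (qp s) s]
  push_cast
  simp only [map_sub, map_add, map_mul, map_one, map_ofNat, map_zero, pow_one]
  ring

lemma lem_ii (s : ℕ) : derivative^[s+1] (qp (s+1))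
    = C (2*(s+1) : ℝ) * (X * derivative^[s] (qp s)) + C ((2*(s+1)*s : ℝ)) * derivative^[s-1] (qp s) := by
  rw [← iter_shift s, deriv_qp, iterate_derivative_C_mul, leibniz_X' (qp s) s]
  push_cast
  simp only [map_sub, map_add, map_mul, map_one, map_ofNat, map_zero, pow_one]
  ring

lemma goalB (s : ℕ) : derivative^[s+3] (qp (s+2))
    = C ((2*(s+2)*(2*s+3) : ℝ)) * derivative^[s+1] (qp (s+1))
      + C ((4*(s+1)*(s+2) : ℝ)) * derivative^[s+1] (qp s) := by
  have h1 := lem_i (s+1)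
  have h2 := lem_i s
  have h3 := lem_ii s
  have h4 := C1 s
  simp only [show s+1+2 = s+3 by omega, show s+1+1 = s+2 by omega] at h1 h2 h3 h4 ⊢
  push_cast at h1 h2 h3 h4 ⊢
  simp only [map_sub, map_add, map_mul, map_one, map_ofNat, map_zero, pow_one] at h1 h2 h3 h4 ⊢
  rw [h1, h2, h3]
  linear_combination (4*(C (s:ℝ)+1)*(C (s:ℝ)+2) : Polynomial ℝ) * h4

lemma iter_shift' (k : ℕ) (p : Polynomial ℝ) :
    derivative (derivative^[k] p) = derivative^[k+1] p :=
  (Function.iterate_succ_apply' derivative k p).symm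

lemma cst_pos (n : ℕ) : 0 < cst n := by
  unfold cst
  positivity

lemma cst_succ (n : ℕ) : cst (n+1) = 2*(n+1) * cst n := by
  simp [cst, Nat.factorial_succ]
  push_cast
  ring

lemma legendreP_eq (n : ℕ) : legendreP n = C (cst n)⁻¹ * derivative^[n] (qp n) := by
  rw [legendreP, qp, smul_eq_C_mul, cst]

lemma deriv_legendreP (n : ℕ) : derivative (legendreP n) = C (cst n)⁻¹ * derivative^[n+1] (qp n) := by
  rw [legendreP_eq, derivative_C_mul, iter_shift']

lemma deriv2_legendreP (n : ℕ) : derivative (derivative (legendreP n)) = C (cst n)⁻¹ * derivative^[n+2] (qp n) := by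
  rw [deriv_legendreP, derivative_C_mul, iter_shift']

lemma legP_rec (s : ℕ) : derivative (legendreP (s+2))
    = derivative (legendreP s) + C (2*(s:ℝ)+3) * legendreP (s+1) := by
  rw [deriv_legendreP, deriv_legendreP, legendreP_eq, goalB]
  have c1 : (cst (s+2))⁻¹ * (2*((s:ℝ)+2)*(2*(s:ℝ)+3)) = (2*(s:ℝ)+3) * (cst (s+1))⁻¹ := by
    rw [show s+2 = (s+1)+1 by omega, cst_succ (s+1)]
    have := (cst_pos (s+1)).ne'
    field_simp
    push_cast
    ring
  have c2 : (cst (s+2))⁻¹ * (4*((s:ℝ)+1)*((s:ℝ)+2)) = (cst s)⁻¹ := by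
    rw [show s+2 = (s+1)+1 by omega, cst_succ (s+1), cst_succ s]
    have h1 := (cst_pos s).ne'
    field_simp
    push_cast
    ring
  calc C (cst (s+2))⁻¹ * (C (2*((s:ℝ)+2)*(2*(s:ℝ)+3)) * derivative^[s+1] (qp (s+1))
          + C (4*((s:ℝ)+1)*((s:ℝ)+2)) * derivative^[s+1] (qp s))
      = C ((cst (s+2))⁻¹ * (2*((s:ℝ)+2)*(2*(s:ℝ)+3))) * derivative^[s+1] (qp (s+1))
          + C ((cst (s+2))⁻¹ * (4*((s:ℝ)+1)*((s:ℝ)+2))) * derivative^[s+1] (qp s) := by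
        simp only [map_mul, map_add, map_ofNat, map_one]; ring
    _ = _ := by
        rw [c1, c2, map_mul]
        ring

lemma legP_ode (ℓ : ℕ) : (X^2-1) * derivative (derivative (legendreP ℓ))
    + C 2 * (X * derivative (legendreP ℓ)) = C ((ℓ*(ℓ+1) : ℝ)) * legendreP ℓ := by
  have h := pearsonIter ℓ ℓ
  rw [deriv2_legendreP, deriv_legendreP, legendreP_eq]
  push_cast at h ⊢
  simp only [map_sub, map_add, map_mul, map_one, map_ofNat, map_zero, pow_one] at h ⊢
  linear_combination (C ((cst ℓ)⁻¹) : Polynomial ℝ) * h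

lemma qp_factor (n : ℕ) : qp n = (X + 1)^n * (X - 1)^n := by
  rw [qp, ← mul_pow]
  congr 1
  ring

lemma eval_iter_qp_one (n : ℕ) : eval 1 (derivative^[n] (qp n)) = cst n := by
  rw [qp_factor, iterate_derivative_mul]
  rw [eval_finset_sum]
  rw [Finset.sum_eq_single n]
  · have h1 : derivative^[n] ((X - 1 : Polynomial ℝ)^n) = n.factorial := by
      have := iterate_derivative_X_sub_pow_self n (1:ℝ)
      simpa using this
    simp [h1, cst]
    norm_num
  · intro k hk hkn
    have hlt : k < n := lt_of_le_of_ne (Nat.lt_succ_iff.mp (Finset.mem_range.mp hk)) hkn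
    have h2 : derivative^[k] ((X - 1 : Polynomial ℝ)^n) = n.descFactorial k • (X - 1)^(n-k) := by
      have := iterate_derivative_X_sub_pow n k (1:ℝ)
      simpa using this
    simp [h2]
    omega
  · intro h
    simp at h

lemma eval_iter_qp_negone (n : ℕ) : eval (-1) (derivative^[n] (qp n)) = (-1)^n * cst n := by
  have comm : qp n = (X - 1)^n * (X + 1)^n := by rw [qp_factor]; ring
  rw [comm, iterate_derivative_mul, eval_finset_sum]
  rw [Finset.sum_eq_single n]
  · have h1 : derivative^[n] ((X + 1 : Polynomial ℝ)^n) = n.factorial := by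
      have := iterate_derivative_X_add_pow n n (1:ℝ)
      simpa [Nat.descFactorial_self] using this
    simp [h1, cst]
    push_cast
    rw [show ((-1:ℝ) - 1) = (-1)*2 by norm_num, mul_pow]
    ring
  · intro k hk hkn
    have hlt : k < n := lt_of_le_of_ne (Nat.lt_succ_iff.mp (Finset.mem_range.mp hk)) hkn
    have h2 : derivative^[k] ((X + 1 : Polynomial ℝ)^n) = n.descFactorial k • (X + 1)^(n-k) := by
      have := iterate_derivative_X_add_pow n k (1:ℝ)
      simpa using this
    simp [h2]
    omega
  · intro h
    simp at h

lemma legendreP_eval_one (n : ℕ) : eval 1 (legendreP n) = 1 := by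
  rw [legendreP_eq, eval_mul, eval_C, eval_iter_qp_one]
  exact inv_mul_cancel₀ (cst_pos n).ne'

lemma legendreP_eval_negone (n : ℕ) : eval (-1) (legendreP n) = (-1)^n := by
  rw [legendreP_eq, eval_mul, eval_C, eval_iter_qp_negone]
  field_simp [(cst_pos n).ne']

lemma abs_le_one_of_sq_le_one {x : ℝ} (h : x^2 ≤ 1) : |x| ≤ 1 := by
  nlinarith [abs_nonneg x, sq_abs x]

lemma legendreP_abs_le (ℓ : ℕ) (x : ℝ) (hx : x ∈ Set.Icc (-1:ℝ) 1) :
    |eval x (legendreP ℓ)| ≤ 1 := by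
  rcases Nat.eq_zero_or_pos ℓ with h0 | hpos
  · subst h0
    simp [legendreP]
  -- setup
  set P := legendreP ℓ with hP
  set k : ℝ := (ℓ*(ℓ+1) : ℝ) with hk
  have hkpos : 0 < k := by
    rw [hk]; positivity
  set p : ℝ → ℝ := fun x => eval x P with hp
  set p1 : ℝ → ℝ := fun x => eval x (derivative P) with hp1
  set p2 : ℝ → ℝ := fun x => eval x (derivative (derivative P)) with hp2
  set g : ℝ → ℝ := fun x => (p x)^2 + (1-x^2)*(p1 x)^2/k with hg
  have ode : ∀ y : ℝ, (y^2-1) * p2 y + 2*(y*p1 y) = k * p y := by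
    intro y
    have := congrArg (eval y) (legP_ode ℓ)
    simpa [hp, hp1, hp2] using this
  have hderiv : ∀ y : ℝ, HasDerivAt g (2*y*(p1 y)^2/k) y := by
    intro y
    have h1 : HasDerivAt p (p1 y) y := Polynomial.hasDerivAt P y
    have h2 : HasDerivAt p1 (p2 y) y := Polynomial.hasDerivAt (derivative P) y
    have hq : HasDerivAt (fun x : ℝ => (1-x^2)) (-(2*y)) y := by
      have := ((hasDerivAt_pow 2 y).const_sub 1)
      simpa using this
    have hd : HasDerivAt g ((2 * p y * p1 y) + ((-(2*y))*(p1 y)^2 + (1-y^2)*(2 * p1 y * p2 y))/k) y := by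
      have ha : HasDerivAt (fun x => (p x)^2) (2 * p y * p1 y) y := by
        simpa [pow_two, mul_comm, mul_assoc, two_mul, Pi.mul_def] using (h1.mul h1).congr_deriv (by ring)
      have hb : HasDerivAt (fun x => (1-x^2)*(p1 x)^2) ((-(2*y))*(p1 y)^2 + (1-y^2)*(2 * p1 y * p2 y)) y := by
        have hb1 : HasDerivAt (fun x => (p1 x)^2) (2 * p1 y * p2 y) y := by
          simpa [pow_two, mul_comm, mul_assoc, two_mul, Pi.mul_def] using (h2.mul h2).congr_deriv (by ring)
        exact hq.mul hb1
      exact ha.add (hb.div_const k)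
    convert hd using 1
    have hode := ode y
    field_simp
    rw [hk] at hode
    linear_combination (p1 y) * hode
  have gdiff : Differentiable ℝ g := fun y => (hderiv y).differentiableAt
  have hmono : MonotoneOn g (Set.Icc 0 1) := by
    apply monotoneOn_of_deriv_nonneg (convex_Icc 0 1) gdiff.continuous.continuousOn
      (fun y _ => (gdiff y).differentiableWithinAt)
    intro y hy
    rw [(hderiv y).deriv]
    have h0 : (0:ℝ) ≤ y := (interior_Icc (a := (0:ℝ)) (b := 1) ▸ hy).1.le
    positivity
  have hanti : AntitoneOn g (Set.Icc (-1) 0) := by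
    apply antitoneOn_of_deriv_nonpos (convex_Icc (-1) 0) gdiff.continuous.continuousOn
      (fun y _ => (gdiff y).differentiableWithinAt)
    intro y hy
    rw [(hderiv y).deriv]
    have h0 : y ≤ (0:ℝ) := (interior_Icc (a := (-1:ℝ)) (b := 0) ▸ hy).2.le
    apply div_nonpos_of_nonpos_of_nonneg _ hkpos.le
    nlinarith [sq_nonneg (p1 y)]
  have g1 : g 1 = 1 := by
    have hpe : p 1 = 1 := legendreP_eval_one ℓ
    simp [hg, hpe]
  have gm1 : g (-1) = 1 := by
    have hsq : ((-1:ℝ)^ℓ)^2 = 1 := by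
      rw [← pow_mul, mul_comm, pow_mul]
      norm_num
    have hpe : p (-1) = (-1)^ℓ := legendreP_eval_negone ℓ
    simp [hg, hpe, hsq]
  have hgx : g x ≤ 1 := by
    rcases le_total x 0 with h | h
    · have := hanti (Set.mem_Icc.mpr ⟨le_refl (-1), by norm_num⟩) (Set.mem_Icc.mpr ⟨hx.1, h⟩) hx.1
      rw [gm1] at this
      exact this
    · have := hmono (Set.mem_Icc.mpr ⟨h, hx.2⟩) (Set.mem_Icc.mpr ⟨by norm_num, le_refl 1⟩) hx.2
      rw [g1] at this
      exact this
  have hple : (p x)^2 ≤ g x := by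
    have h1 : (0:ℝ) ≤ (1-x^2) := by nlinarith [hx.1, hx.2]
    have h2 : (0:ℝ) ≤ (1-x^2)*(p1 x)^2/k := by positivity
    simp only [hg]
    linarith
  have : (eval x P)^2 ≤ 1 := le_trans hple hgx
  exact abs_le_one_of_sq_le_one this

lemma key : ∀ (M : ℕ) (u : ℝ → ℝ), ContDiff ℝ M u →
    (∀ m < M, iteratedDeriv m u (-1) = 0 ∧ iteratedDeriv m u 1 = 0) →
    ∀ C : ℝ, (∀ x ∈ Set.Icc (-1:ℝ) 1, |iteratedDeriv M u x| ≤ C) →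
    ∀ ℓ : ℕ, 2*M ≤ ℓ →
    |∫ x in (-1:ℝ)..1, u x * (legendreP ℓ).eval x| ≤ 2^M*2*C/(2*(ℓ:ℝ) - 2*(M:ℝ) + 1)^M := by
  intro M
  induction M with
  | zero =>
    intro u hu _ C hC ℓ _
    have hb : ∀ x ∈ Set.uIoc (-1:ℝ) 1, ‖u x * (legendreP ℓ).eval x‖ ≤ C := by
      intro x hx
      have hx' : x ∈ Set.Icc (-1:ℝ) 1 := by
        rw [Set.uIoc_of_le (by norm_num : (-1:ℝ) ≤ 1)] at hx
        exact ⟨hx.1.le, hx.2⟩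
      have h1 : |u x| ≤ C := by
        have := hC x hx'
        simpa [iteratedDeriv_zero] using this
      have h2 : |(legendreP ℓ).eval x| ≤ 1 := legendreP_abs_le ℓ x hx'
      calc ‖u x * (legendreP ℓ).eval x‖ = |u x| * |(legendreP ℓ).eval x| := abs_mul _ _
        _ ≤ C * 1 := by
            apply mul_le_mul h1 h2 (abs_nonneg _) (le_trans (abs_nonneg _) h1)
        _ = C := mul_one C
    have := intervalIntegral.norm_integral_le_of_norm_le_const hb
    simp only [pow_zero, one_mul]
    calc |∫ x in (-1:ℝ)..1, u x * (legendreP ℓ).eval x| ≤ C * |1 - (-1)| := this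
      _ = 2 * C / 1 := by norm_num; ring
      _ = 2 * C / (2*(ℓ:ℝ) - 2*(0:ℝ) + 1)^(0:ℕ) := by norm_num
  | succ M ih =>
    intro u hu hv C hC ℓ hℓ
    -- ℓ = s+1 with s ≥ 2M+1
    obtain ⟨s, rfl⟩ : ∃ s, ℓ = s + 1 := ⟨ℓ - 1, by omega⟩
    have hs : 2*M + 1 ≤ s := by omega
    -- regularity of u
    have huc : ContDiff ℝ ((M : WithTop ℕ∞) + 1) u := by
      have h : ((M+1 : ℕ) : WithTop ℕ∞) = (M : WithTop ℕ∞) + 1 := by push_cast; rfl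
      rw [← h]
      exact_mod_cast hu
    have hud : Differentiable ℝ u := (contDiff_succ_iff_deriv.mp huc).1
    have hu' : ContDiff ℝ M (deriv u) := by
      have := (contDiff_succ_iff_deriv.mp huc).2.2
      exact_mod_cast this
    have hCnonneg : 0 ≤ C := le_trans (abs_nonneg _) (hC 0 (by norm_num))
    -- vanishing for deriv u
    have hv' : ∀ m < M, iteratedDeriv m (deriv u) (-1) = 0 ∧ iteratedDeriv m (deriv u) 1 = 0 := by
      intro m hm
      rw [← iteratedDeriv_succ']
      exact hv (m+1) (by omega)
    have hC' : ∀ x ∈ Set.Icc (-1:ℝ) 1, |iteratedDeriv M (deriv u) x| ≤ C := by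
      intro x hx
      rw [← iteratedDeriv_succ']
      exact hC x hx
    -- the two IH bounds
    have ih1 := ih (deriv u) hu' hv' C hC' (s+2) (by omega)
    have ih2 := ih (deriv u) hu' hv' C hC' s (by omega)
    -- integration by parts
    set V : Polynomial ℝ := legendreP (s+2) - legendreP s with hV
    have hdV : derivative V = Polynomial.C (2*(s:ℝ)+3) * legendreP (s+1) := by
      rw [hV, derivative_sub, legP_rec]
      ring
    have hder : ∀ x ∈ Set.uIcc (-1:ℝ) 1, HasDerivAt u (deriv u x) x :=
      fun x _ => (hud x).hasDerivAt
    have hderV : ∀ x ∈ Set.uIcc (-1:ℝ) 1, HasDerivAt (fun y => eval y V) (eval x (derivative V)) x :=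
      fun x _ => Polynomial.hasDerivAt V x
    have hint1 : IntervalIntegrable (deriv u) MeasureTheory.volume (-1) 1 :=
      (hu'.continuous).intervalIntegrable _ _
    have hint2 : IntervalIntegrable (fun x => eval x (derivative V)) MeasureTheory.volume (-1) 1 :=
      ((derivative V).continuous_aeval.intervalIntegrable _ _)
    have ibp := intervalIntegral.integral_mul_deriv_eq_deriv_mul hder hderV hint1 hint2
    have hu1 : u 1 = 0 := by simpa [iteratedDeriv_zero] using (hv 0 (by omega)).2
    have hum1 : u (-1) = 0 := by simpa [iteratedDeriv_zero] using (hv 0 (by omega)).1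
    rw [hu1, hum1] at ibp
    simp only [zero_mul, sub_zero, zero_sub] at ibp
    -- LHS of ibp is (2s+3) * target integral
    have lhs_eq : (∫ x in (-1:ℝ)..1, u x * eval x (derivative V))
        = (2*(s:ℝ)+3) * ∫ x in (-1:ℝ)..1, u x * eval x (legendreP (s+1)) := by
      rw [← intervalIntegral.integral_const_mul]
      congr 1
      ext x
      rw [hdV]
      simp only [eval_mul, eval_C]
      ring
    -- RHS split
    have hint3 : IntervalIntegrable (fun x => deriv u x * eval x (legendreP (s+2)))
        MeasureTheory.volume (-1) 1 :=
      ((hu'.continuous).mul (legendreP (s+2)).continuous_aeval).intervalIntegrable _ _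
    have hint4 : IntervalIntegrable (fun x => deriv u x * eval x (legendreP s))
        MeasureTheory.volume (-1) 1 :=
      ((hu'.continuous).mul (legendreP s).continuous_aeval).intervalIntegrable _ _
    have rhs_eq : (∫ x in (-1:ℝ)..1, deriv u x * eval x V)
        = (∫ x in (-1:ℝ)..1, deriv u x * eval x (legendreP (s+2)))
          - ∫ x in (-1:ℝ)..1, deriv u x * eval x (legendreP s) := by
      rw [← intervalIntegral.integral_sub hint3 hint4]
      congr 1
      ext x
      rw [hV]
      simp only [eval_sub]
      ring
    rw [lhs_eq, rhs_eq] at ibp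
    -- solve for the target integral
    have h2s3 : (0:ℝ) < 2*(s:ℝ)+3 := by positivity
    have key_eq : (∫ x in (-1:ℝ)..1, u x * eval x (legendreP (s+1)))
        = -((∫ x in (-1:ℝ)..1, deriv u x * eval x (legendreP (s+2)))
          - ∫ x in (-1:ℝ)..1, deriv u x * eval x (legendreP s)) / (2*(s:ℝ)+3) := by
      field_simp
      linarith [ibp]
    -- denominators
    set d : ℝ := 2*((s:ℝ)+1) - 2*((M:ℝ)+1) + 1 with hd
    have hMs : (2*M : ℝ) + 1 ≤ (s:ℝ) := by exact_mod_cast hs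
    have hd1 : (1:ℝ) ≤ d := by rw [hd]; linarith
    have hdpos : (0:ℝ) < d := lt_of_lt_of_le zero_lt_one hd1
    have hdle : d ≤ 2*(s:ℝ)+3 := by rw [hd]; linarith [Nat.cast_nonneg (α := ℝ) M]
    -- bound the two ih denominators below by d
    have e1 : d ≤ 2*((s:ℝ)+2) - 2*(M:ℝ) + 1 := by rw [hd]; linarith [Nat.cast_nonneg (α := ℝ) M]
    have e2 : d = 2*(s:ℝ) - 2*(M:ℝ) + 1 := by rw [hd]; ring
    have hb1 : |∫ x in (-1:ℝ)..1, deriv u x * eval x (legendreP (s+2))| ≤ 2^M*2*C/d^M := by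
      refine le_trans ih1 ?_
      apply div_le_div_of_nonneg_left (by positivity) (by positivity)
      apply pow_le_pow_left₀ hdpos.le
      push_cast
      linarith [e1]
    have hb2 : |∫ x in (-1:ℝ)..1, deriv u x * eval x (legendreP s)| ≤ 2^M*2*C/d^M := by
      refine le_trans ih2 ?_
      apply le_of_eq
      congr 1
      rw [e2]
    -- final assembly
    rw [key_eq]
    have habs : |(-((∫ x in (-1:ℝ)..1, deriv u x * eval x (legendreP (s+2)))
          - ∫ x in (-1:ℝ)..1, deriv u x * eval x (legendreP s)) / (2*(s:ℝ)+3))|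
        ≤ (2^M*2*C/d^M + 2^M*2*C/d^M) / (2*(s:ℝ)+3) := by
      rw [abs_div, abs_neg, abs_of_pos h2s3]
      apply div_le_div_of_nonneg_right ?_ h2s3.le
      calc |(∫ x in (-1:ℝ)..1, deriv u x * eval x (legendreP (s+2)))
          - ∫ x in (-1:ℝ)..1, deriv u x * eval x (legendreP s)|
          ≤ |∫ x in (-1:ℝ)..1, deriv u x * eval x (legendreP (s+2))|
            + |∫ x in (-1:ℝ)..1, deriv u x * eval x (legendreP s)| := abs_sub _ _
        _ ≤ 2^M*2*C/d^M + 2^M*2*C/d^M := add_le_add hb1 hb2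
    refine le_trans habs ?_
    have goal_eq : (2:ℝ)^(M+1)*2*C/(2*((s:ℝ)+1) - 2*((M:ℝ)+1) + 1)^(M+1)
        = (2^M*2*C/d^M + 2^M*2*C/d^M) / d := by
      rw [← hd]
      have hdM : d^M ≠ 0 := by positivity
      field_simp
      ring
    have final : (2^M*2*C/d^M + 2^M*2*C/d^M) / (2*(s:ℝ)+3)
        ≤ (2^M*2*C/d^M + 2^M*2*C/d^M) / d := by
      apply div_le_div_of_nonneg_left (by positivity) hdpos hdle
    refine le_trans final ?_
    rw [← goal_eq]
    apply le_of_eq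
    push_cast
    ring_nf


theorem legendre_coefficient_decay (M : ℕ) (hM : 1 ≤ M) (u : ℝ → ℝ)
    (hu : ContDiff ℝ M u)
    (hvanish : ∀ m < M, iteratedDeriv m u (-1) = 0 ∧ iteratedDeriv m u 1 = 0)
    (C : ℝ) (hC : ∀ x ∈ Set.Icc (-1:ℝ) 1, |iteratedDeriv M u x| ≤ C)
    (ℓ : ℕ) (hℓ : 2 * M ≤ ℓ) :
    |∫ x in (-1:ℝ)..1, u x * (legendreP ℓ).eval x| ≤
      2 ^ M * 2 * C / (2 * ℓ - 2 * M + 1 : ℝ) ^ M := by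
  exact key M u hu hvanish C hC ℓ hℓ
end
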